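/- Let a < b be integers and R = ℤ[x]/((x−a)(x−b)). The number of ℤ-conjugacy classes of matrices in Mat_2(ℤ) with characteristic polynomial (x−a)(x−b) equals ⌊(b−a)/2⌋ + 1. -/

import Mathlib

open Polynomial Matrix

private lemma charpoly_two (M : Matrix (Fin 2) (Fin 2) ℤ) :
    M.charpoly = (X - C (M 0 0)) * (X - C (M 1 1)) - C (M 0 1) * C (M 1 0) := by
  rw [Matrix.charpoly, Matrix.det_fin_two]
  simp [Matrix.charmatrix_apply_eq, Matrix.charmatrix_apply_ne]


private def Mm (a b m : ℤ) : Matrix (Fin 2) (Fin 2) ℤ := !![a, m; 0, b]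

private lemma charpoly_Mm (a b m : ℤ) : (Mm a b m).charpoly = (X - C a) * (X - C b) := by
  rw [charpoly_two]
  simp [Mm]

private lemma trace_det_of_charpoly {a b : ℤ} (A : Matrix (Fin 2) (Fin 2) ℤ)
    (hA : A.charpoly = (X - C a) * (X - C b)) :
    A 0 0 + A 1 1 = a + b ∧ A 0 0 * A 1 1 - A 0 1 * A 1 0 = a * b := by
  rw [charpoly_two] at hA
  have e0 := congrArg (Polynomial.eval 0) hA
  have e1 := congrArg (Polynomial.eval 1) hA
  have e2 := congrArg (Polynomial.eval 2) hA
  simp only [eval_mul, eval_sub, eval_X, eval_C] at e0 e1 e2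
  constructor <;> nlinarith [e0, e1, e2]

private lemma entries22 {w x y z w' x' y' z' : ℤ} (h1 : w = w') (h2 : x = x')
    (h3 : y = y') (h4 : z = z') : !![w, x; y, z] = !![w', x'; y', z'] := by
  rw [h1, h2, h3, h4]

private lemma normal_form {a b : ℤ} (hab : a < b) (A : Matrix (Fin 2) (Fin 2) ℤ)
    (hA : A.charpoly = (X - C a) * (X - C b)) :
    ∃ m : ℤ, ∃ T : Matrix.GeneralLinearGroup (Fin 2) ℤ,
      (T : Matrix (Fin 2) (Fin 2) ℤ) * A *
        ((T⁻¹ : Matrix.GeneralLinearGroup (Fin 2) ℤ) : Matrix (Fin 2) (Fin 2) ℤ) = Mm a b m := by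
  obtain ⟨htr, hdet⟩ := trace_det_of_charpoly A hA
  set p := A 0 0 with hp
  set q := A 0 1 with hq
  set r := A 1 0 with hr
  set s := A 1 1 with hs
  have hker : ∃ w₁ w₂ : ℤ, ¬(w₁ = 0 ∧ w₂ = 0) ∧ (p - a) * w₁ + q * w₂ = 0 ∧
      r * w₁ + (s - a) * w₂ = 0 := by
    by_cases h1 : (p - a) = 0 ∧ q = 0
    · refine ⟨s - a, -r, ?_, by rw [h1.1, h1.2]; ring, by ring⟩
      rintro ⟨hsa, hra⟩
      have := h1.1
      linarith
    · refine ⟨q, -(p - a), ?_, by ring, by linear_combination a * htr - hdet⟩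
      rintro ⟨h, h'⟩
      exact h1 ⟨by linarith, h⟩
  obtain ⟨w₁, w₂, hw0, hw1, hw2⟩ := hker
  set g : ℤ := (Int.gcd w₁ w₂ : ℤ) with hg
  have hgpos : 0 < g := by
    have : Int.gcd w₁ w₂ ≠ 0 := fun h => hw0 (Int.gcd_eq_zero_iff.mp h)
    positivity
  set v₁ : ℤ := w₁ / g with hv₁
  set v₂ : ℤ := w₂ / g with hv₂
  have hgd1 : g ∣ w₁ := Int.gcd_dvd_left w₁ w₂
  have hgd2 : g ∣ w₂ := Int.gcd_dvd_right w₁ w₂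
  have hw₁ : w₁ = g * v₁ := by rw [hv₁, Int.mul_ediv_cancel' hgd1]
  have hw₂ : w₂ = g * v₂ := by rw [hv₂, Int.mul_ediv_cancel' hgd2]
  have hk1 : (p - a) * v₁ + q * v₂ = 0 := by
    have h0 : g * ((p - a) * v₁ + q * v₂) = 0 := by rw [hw₁, hw₂] at hw1; linarith [hw1]
    exact (mul_eq_zero.mp h0).resolve_left (by omega)
  have hk2 : r * v₁ + (s - a) * v₂ = 0 := by
    have h0 : g * (r * v₁ + (s - a) * v₂) = 0 := by rw [hw₁, hw₂] at hw2; linarith [hw2]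
    exact (mul_eq_zero.mp h0).resolve_left (by omega)
  have hcop : Int.gcd v₁ v₂ = 1 := by
    rw [hv₁, hv₂, hg]
    exact Int.gcd_div_gcd_div_gcd (by omega)
  set x : ℤ := Int.gcdA v₁ v₂ with hx'
  set y : ℤ := Int.gcdB v₁ v₂ with hy'
  have hx : v₁ * x + v₂ * y = 1 := by
    have h := Int.gcd_eq_gcd_ab v₁ v₂
    rw [hcop] at h
    exact h.symm
  set Tm : Matrix (Fin 2) (Fin 2) ℤ := !![x, y; -v₂, v₁] with hTm
  set Ti : Matrix (Fin 2) (Fin 2) ℤ := !![v₁, -y; v₂, x] with hTi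
  have h1 : Tm * Ti = 1 := by
    rw [hTm, hTi, Matrix.mul_fin_two, Matrix.one_fin_two]
    exact entries22 (by linarith) (by ring) (by ring) (by linarith)
  have h2 : Ti * Tm = 1 := by
    rw [hTm, hTi, Matrix.mul_fin_two, Matrix.one_fin_two]
    exact entries22 (by linarith) (by ring) (by ring) (by linarith)
  refine ⟨(x * p + y * r) * (-y) + (x * q + y * s) * x, ⟨Tm, Ti, h1, h2⟩, ?_⟩
  show Tm * A * Ti = _
  rw [Matrix.eta_fin_two A, ← hp, ← hq, ← hr, ← hs, hTm, hTi, Matrix.mul_fin_two,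
    Matrix.mul_fin_two, Mm]
  exact entries22 (by linear_combination x * hk1 + y * hk2 + a * hx) rfl
    (by linear_combination v₁ * hk2 - v₂ * hk1)
    (by linear_combination (-x) * hk1 + (-y) * hk2 + (p + s - a) * hx + htr)

private def Conj (A B : Matrix (Fin 2) (Fin 2) ℤ) : Prop :=
  ∃ T : Matrix.GeneralLinearGroup (Fin 2) ℤ,
    (T : Matrix (Fin 2) (Fin 2) ℤ) * A *
      ((T⁻¹ : Matrix.GeneralLinearGroup (Fin 2) ℤ) : Matrix (Fin 2) (Fin 2) ℤ) = B

private lemma conj_refl (A : Matrix (Fin 2) (Fin 2) ℤ) : Conj A A := by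
  refine ⟨1, ?_⟩
  simp

private lemma conj_symm {A B : Matrix (Fin 2) (Fin 2) ℤ} (h : Conj A B) : Conj B A := by
  obtain ⟨T, hT⟩ := h
  refine ⟨T⁻¹, ?_⟩
  rw [← hT, inv_inv]
  calc (↑T⁻¹ : Matrix (Fin 2) (Fin 2) ℤ) * (↑T * A * ↑T⁻¹) * ↑T
      = (↑T⁻¹ * ↑T) * A * (↑T⁻¹ * ↑T) := by noncomm_ring
    _ = A := by rw [Units.inv_mul]; simp

private lemma conj_trans {A B C : Matrix (Fin 2) (Fin 2) ℤ} (h1 : Conj A B) (h2 : Conj B C) :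
    Conj A C := by
  obtain ⟨T₁, hT₁⟩ := h1
  obtain ⟨T₂, hT₂⟩ := h2
  refine ⟨T₂ * T₁, ?_⟩
  rw [_root_.mul_inv_rev, Units.val_mul, Units.val_mul, ← hT₂, ← hT₁]
  noncomm_ring

private lemma conj_shift (a b m k : ℤ) : Conj (Mm a b m) (Mm a b (m + k * (b - a))) := by
  have h1 : (!![1, k; 0, 1] : Matrix (Fin 2) (Fin 2) ℤ) * !![1, -k; 0, 1] = 1 := by
    rw [Matrix.mul_fin_two, Matrix.one_fin_two]
    exact entries22 (by ring) (by ring) (by ring) (by ring)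
  have h2 : (!![1, -k; 0, 1] : Matrix (Fin 2) (Fin 2) ℤ) * !![1, k; 0, 1] = 1 := by
    rw [Matrix.mul_fin_two, Matrix.one_fin_two]
    exact entries22 (by ring) (by ring) (by ring) (by ring)
  refine ⟨⟨!![1, k; 0, 1], !![1, -k; 0, 1], h1, h2⟩, ?_⟩
  show !![1, k; 0, 1] * Mm a b m * !![1, -k; 0, 1] = _
  rw [Mm, Mm, Matrix.mul_fin_two, Matrix.mul_fin_two]
  exact entries22 (by ring) (by ring) (by ring) (by ring)

private lemma conj_neg (a b m : ℤ) : Conj (Mm a b m) (Mm a b (-m)) := by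
  have h1 : (!![1, 0; 0, -1] : Matrix (Fin 2) (Fin 2) ℤ) * !![1, 0; 0, -1] = 1 := by
    rw [Matrix.mul_fin_two, Matrix.one_fin_two]
    exact entries22 (by ring) (by ring) (by ring) (by ring)
  refine ⟨⟨!![1, 0; 0, -1], !![1, 0; 0, -1], h1, h1⟩, ?_⟩
  show !![1, 0; 0, -1] * Mm a b m * !![1, 0; 0, -1] = _
  rw [Mm, Mm, Matrix.mul_fin_two, Matrix.mul_fin_two]
  exact entries22 (by ring) (by ring) (by ring) (by ring)

private lemma reduce_range {a b : ℤ} (hab : a < b) (m : ℤ) :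
    ∃ m₀ : ℤ, 0 ≤ m₀ ∧ 2 * m₀ ≤ b - a ∧ Conj (Mm a b m) (Mm a b m₀) := by
  set d : ℤ := b - a with hd
  have hd0 : 0 < d := by omega
  set r : ℤ := m % d with hr
  have hr0 : 0 ≤ r := Int.emod_nonneg m (by omega)
  have hrd : r < d := Int.emod_lt_of_pos m hd0
  have hconj : Conj (Mm a b m) (Mm a b r) := by
    have : r = m + (-(m / d)) * (b - a) := by
      rw [hr, ← hd]
      linear_combination Int.emod_add_mul_ediv m d
    rw [this]
    exact conj_shift a b m _
  by_cases hcase : 2 * r ≤ d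
  · exact ⟨r, hr0, by omega, hconj⟩
  · refine ⟨d - r, by omega, by omega, conj_trans hconj ?_⟩
    have h2 : Conj (Mm a b r) (Mm a b (-r)) := conj_neg a b r
    have h3 : Conj (Mm a b (-r)) (Mm a b (-r + 1 * (b - a))) := conj_shift a b (-r) 1
    have : -r + 1 * (b - a) = d - r := by omega
    rw [this] at h3
    exact conj_trans h2 h3

private lemma entries22' {w x y z w' x' y' z' : ℤ} (h : !![w, x; y, z] = !![w', x'; y', z']) :
    w = w' ∧ x = x' ∧ y = y' ∧ z = z' := by
  refine ⟨?_, ?_, ?_, ?_⟩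
  · have h0 := congrFun (congrFun h 0) 0
    simpa using h0
  · have h0 := congrFun (congrFun h 0) 1
    simpa using h0
  · have h0 := congrFun (congrFun h 1) 0
    simpa using h0
  · have h0 := congrFun (congrFun h 1) 1
    simpa using h0

private lemma inj_range {a b : ℤ} (hab : a < b) {m m' : ℤ} (hm0 : 0 ≤ m) (hm1 : 2 * m ≤ b - a)
    (hm0' : 0 ≤ m') (hm1' : 2 * m' ≤ b - a) (h : Conj (Mm a b m) (Mm a b m')) : m = m' := by
  obtain ⟨T, hT⟩ := h
  set d : ℤ := b - a with hd
  have hd0 : 0 < d := by omega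
  have hE : (T : Matrix (Fin 2) (Fin 2) ℤ) * Mm a b m = Mm a b m' * T := by
    have h2 := congrArg (fun M => M * (T : Matrix (Fin 2) (Fin 2) ℤ)) hT
    simpa [mul_assoc, Units.inv_mul] using h2
  set α := (T : Matrix (Fin 2) (Fin 2) ℤ) 0 0 with hα
  set β := (T : Matrix (Fin 2) (Fin 2) ℤ) 0 1 with hβ
  set γ := (T : Matrix (Fin 2) (Fin 2) ℤ) 1 0 with hγ
  set δ := (T : Matrix (Fin 2) (Fin 2) ℤ) 1 1 with hδ
  rw [Matrix.eta_fin_two (T : Matrix (Fin 2) (Fin 2) ℤ), ← hα, ← hβ, ← hγ, ← hδ, Mm, Mm,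
    Matrix.mul_fin_two, Matrix.mul_fin_two] at hE
  obtain ⟨h00, h01, h10, h11⟩ := entries22' hE
  have hdetu : IsUnit ((T : Matrix (Fin 2) (Fin 2) ℤ).det) :=
    (Matrix.isUnit_iff_isUnit_det _).mp ⟨T, rfl⟩
  have hdet2 : α * δ - β * γ = 1 ∨ α * δ - β * γ = -1 := by
    rw [Matrix.det_fin_two, ← hα, ← hβ, ← hγ, ← hδ] at hdetu
    exact Int.isUnit_iff.mp hdetu
  have hγ0 : γ = 0 := by
    have hz : γ * (a - b) = 0 := by linarith [h10]
    rcases mul_eq_zero.mp hz with h' | h'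
    · exact h'
    · omega
  rw [hγ0] at hdet2
  have hαδ : α * δ = 1 ∨ α * δ = -1 := by rcases hdet2 with h' | h' <;> [left; right] <;> linarith
  have hδu : δ = 1 ∨ δ = -1 := by
    rcases hαδ with h' | h'
    · exact Int.isUnit_iff.mp (IsUnit.of_mul_eq_one (a := δ) α (by linarith [mul_comm α δ]))
    · exact Int.isUnit_iff.mp (IsUnit.of_mul_eq_one (a := δ) (-α) (by linarith [mul_comm α δ]))
  have key : α * m + β * d = m' * δ := by rw [hd]; linarith [h01]
  rcases hδu with hδ1 | hδ1 <;> rcases hαδ with hε | hε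
  · -- δ = 1, α = 1 : m' - m = β * d
    rw [hδ1] at hε key
    have hα1 : α = 1 := by linarith
    rw [hα1] at key
    have hb1 : β * d < 1 * d := by linarith
    have hb2 : (-1) * d < β * d := by linarith
    have := lt_of_mul_lt_mul_right hb1 (le_of_lt hd0)
    have := lt_of_mul_lt_mul_right hb2 (le_of_lt hd0)
    have hβ0 : β = 0 := by omega
    rw [hβ0] at key
    linarith
  · -- δ = 1, α = -1 : m + m' = β * d
    rw [hδ1] at hε key
    have hα1 : α = -1 := by linarith
    rw [hα1] at key
    have hb1 : β * d ≤ 1 * d := by linarith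
    have hb2 : 0 * d ≤ β * d := by linarith
    have hu := le_of_mul_le_mul_right hb1 hd0
    have hl := le_of_mul_le_mul_right hb2 hd0
    have hβ01 : β = 0 ∨ β = 1 := by omega
    rcases hβ01 with h' | h' <;> rw [h'] at key <;> linarith
  · -- δ = -1, α = -1 : m' = m - β * d
    rw [hδ1] at hε key
    have hα1 : α = -1 := by linarith
    rw [hα1] at key
    have hb1 : β * d < 1 * d := by linarith
    have hb2 : (-1) * d < β * d := by linarith
    have := lt_of_mul_lt_mul_right hb1 (le_of_lt hd0)
    have := lt_of_mul_lt_mul_right hb2 (le_of_lt hd0)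
    have hβ0 : β = 0 := by omega
    rw [hβ0] at key
    linarith
  · -- δ = -1, α = 1 : m + m' = -β * d
    rw [hδ1] at hε key
    have hα1 : α = 1 := by linarith
    rw [hα1] at key
    have hb1 : (-β) * d ≤ 1 * d := by linarith
    have hb2 : 0 * d ≤ (-β) * d := by linarith
    have hu := le_of_mul_le_mul_right hb1 hd0
    have hl := le_of_mul_le_mul_right hb2 hd0
    have hβ01 : β = 0 ∨ β = -1 := by omega
    rcases hβ01 with h' | h' <;> rw [h'] at key <;> linarith

set_option maxHeartbeats 1000000
theorem stmt_7 (a b : ℤ) (hab : a < b) :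
    (Nat.card (Quot (fun A B : {M : Matrix (Fin 2) (Fin 2) ℤ //
        M.charpoly = (X - C a) * (X - C b)} =>
      ∃ T : Matrix.GeneralLinearGroup (Fin 2) ℤ,
        (T : Matrix (Fin 2) (Fin 2) ℤ) * (A : Matrix (Fin 2) (Fin 2) ℤ) *
          ((T⁻¹ : Matrix.GeneralLinearGroup (Fin 2) ℤ) : Matrix (Fin 2) (Fin 2) ℤ) = B)) : ℤ) =
    (b - a) / 2 + 1 := by
  let S := {M : Matrix (Fin 2) (Fin 2) ℤ // M.charpoly = (X - C a) * (X - C b)}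
  let r : S → S → Prop := fun A B => Conj A.1 B.1
  show (Nat.card (Quot r) : ℤ) = (b - a) / 2 + 1
  have hequiv : Equivalence r :=
    ⟨fun A => conj_refl A.1, fun h => conj_symm h, fun h1 h2 => conj_trans h1 h2⟩
  have key : ∀ A B : S, Quot.mk r A = Quot.mk r B ↔ Conj A.1 B.1 := fun A B =>
    Iff.trans Quot.eq (Equivalence.eqvGen_iff hequiv)
  set K : ℕ := ((b - a) / 2).toNat with hK
  let F : Fin (K + 1) → Quot r := fun i =>
    Quot.mk r ⟨Mm a b (i : ℤ), charpoly_Mm a b _⟩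
  have hbij : Function.Bijective F := by
    constructor
    · intro i j hij
      have h1 : Conj (Mm a b (i : ℤ)) (Mm a b (j : ℤ)) := (key _ _).mp hij
      have hi := i.isLt
      have hj := j.isLt
      have heq : ((i : ℕ) : ℤ) = ((j : ℕ) : ℤ) := by
        refine inj_range hab (by positivity) ?_ (by positivity) ?_ h1 <;> omega
      exact Fin.ext (by omega)
    · refine Quot.ind ?_
      intro A
      obtain ⟨m, T, hT⟩ := normal_form hab A.1 A.2
      obtain ⟨m₀, hm₀0, hm₀1, hm₀c⟩ := reduce_range hab m
      have hc : Conj A.1 (Mm a b m₀) := conj_trans ⟨T, hT⟩ hm₀c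
      have hlt : m₀.toNat < K + 1 := by omega
      refine ⟨⟨m₀.toNat, hlt⟩, ?_⟩
      show Quot.mk r ⟨Mm a b ((m₀.toNat : ℕ) : ℤ), _⟩ = Quot.mk r A
      have hcast : ((m₀.toNat : ℕ) : ℤ) = m₀ := by omega
      rw [key]
      show Conj (Mm a b ((m₀.toNat : ℕ) : ℤ)) A.1
      rw [hcast]
      exact conj_symm hc
  have hcard : Nat.card (Quot r) = K + 1 := by
    rw [← Nat.card_eq_of_bijective F hbij]
    simp
  rw [hcard]
  push_cast
  omega
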